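/- Let c > 0 and let R : [0, ∞) → [0, ∞) be differentiable with R′(τ) ≤ −c ( exp(2 R(τ)) − 1 ) for all τ ≥ 0. Then for all τ > 0: R(τ) ≤ −(1/2) ln( 1 − ( 1 − exp(−2 R(0)) ) exp(−2cτ) ). -/

import Mathlib

open MeasureTheory Filter Set

/-- The `p`-logarithm: `ln_p u = (u^(p-1) - 1)/(p-1)` for `p ≠ 1`, and `ln u` for `p = 1`. -/
noncomputable def lnp (p : ℝ) (u : ℝ) : ℝ :=
  if p = 1 then Real.log u else (u ^ (p - 1) - 1) / (p - 1)

/-- Generalized Fisher information `I_p(f) = (1/2) ∫ f ((ln_p f)')²`. -/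
noncomputable def fisherP (p : ℝ) (f : ℝ → ℝ) : ℝ :=
  (1 / 2) * ∫ x : ℝ, f x * (deriv (fun y => lnp p (f y)) x) ^ 2

/-- Rényi entropy of order `p ≠ 1`: `R_p(f) = (1/(1-p)) ln ∫ f^p`. -/
noncomputable def renyi (p : ℝ) (f : ℝ → ℝ) : ℝ :=
  (1 / (1 - p)) * Real.log (∫ x : ℝ, f x ^ p)

/-- `f`, together with all its derivatives, decays faster than any polynomial at infinity. -/
def RapidDecay (f : ℝ → ℝ) : Prop :=
  ∀ n k : ℕ, Tendsto (fun x => x ^ n * iteratedDeriv k f x) (cocompact ℝ) (nhds 0)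

/-- explicit solution of the differential inequality
`R' ≤ −c(e^{2R} − 1)` with nonnegative values: for all `τ > 0`,
`R(τ) ≤ −(1/2) ln(1 − (1 − e^{−2R(0)}) e^{−2cτ})`. -/
theorem ode_inequality_decay
    (c : ℝ) (hc : 0 < c) (R : ℝ → ℝ)
    (hR0 : ∀ τ : ℝ, 0 ≤ τ → 0 ≤ R τ)
    (hdiff : ∀ τ : ℝ, 0 ≤ τ → DifferentiableAt ℝ R τ)
    (hineq : ∀ τ : ℝ, 0 ≤ τ → deriv R τ ≤ -c * (Real.exp (2 * R τ) - 1)) :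
    ∀ τ : ℝ, 0 < τ →
      R τ ≤ -(1 / 2) *
        Real.log (1 - (1 - Real.exp (-2 * R 0)) * Real.exp (-2 * c * τ)) := by
  intro τ hτ
  set g : ℝ → ℝ := fun t => (1 - Real.exp (-2 * R t)) * Real.exp (2 * c * t) with hg
  -- derivative of g at nonneg points
  have hgderiv : ∀ t : ℝ, 0 ≤ t → HasDerivAt g
      ((-(Real.exp (-2 * R t) * (-2 * deriv R t))) * Real.exp (2 * c * t)
        + (1 - Real.exp (-2 * R t)) * (Real.exp (2 * c * t) * (2 * c))) t := by
    intro t ht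
    have hR : HasDerivAt R (deriv R t) t := (hdiff t ht).hasDerivAt
    have h1 : HasDerivAt (fun s => Real.exp (-2 * R s)) (Real.exp (-2 * R t) * (-2 * deriv R t)) t := by
      have := (hR.const_mul (-2)).exp
      simpa using this
    have h2 : HasDerivAt (fun s => 1 - Real.exp (-2 * R s)) (-(Real.exp (-2 * R t) * (-2 * deriv R t))) t := by
      simpa [Pi.sub_def] using (hasDerivAt_const t (1:ℝ)).sub h1
    have h3 : HasDerivAt (fun s : ℝ => Real.exp (2 * c * s)) (Real.exp (2 * c * t) * (2 * c)) t := by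
      have := ((hasDerivAt_id t).const_mul (2 * c)).exp
      simpa [mul_comm] using this
    simpa [hg, Pi.mul_def] using h2.mul h3
  have hgnonpos : ∀ t : ℝ, 0 < t → deriv g t ≤ 0 := by
    intro t ht
    rw [(hgderiv t ht.le).deriv]
    have hE : (0:ℝ) < Real.exp (-2 * R t) := Real.exp_pos _
    have hF : (0:ℝ) < Real.exp (2 * c * t) := Real.exp_pos _
    have hEF : Real.exp (-2 * R t) * Real.exp (2 * R t) = 1 := by
      rw [← Real.exp_add]; ring_nf; exact Real.exp_zero
    have hi := hineq t ht.le
    have h1 : deriv R t * Real.exp (-2 * R t) + c * (1 - Real.exp (-2 * R t)) ≤ 0 := by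
      nlinarith [mul_le_mul_of_nonneg_right hi hE.le]
    nlinarith [mul_le_mul_of_nonneg_right h1 hF.le]
  have hanti : AntitoneOn g (Set.Icc 0 τ) := by
    apply antitoneOn_of_deriv_nonpos (convex_Icc 0 τ)
    · intro t ht
      exact ((hgderiv t ht.1).differentiableAt.continuousAt).continuousWithinAt
    · intro t ht
      rw [interior_Icc] at ht
      exact (hgderiv t ht.1.le).differentiableAt.differentiableWithinAt
    · intro t ht
      rw [interior_Icc] at ht
      exact hgnonpos t ht.1
  have hgτ : g τ ≤ g 0 :=
    hanti (Set.left_mem_Icc.2 hτ.le) (Set.mem_Icc.2 ⟨hτ.le, le_rfl⟩) hτ.le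
  have hg0 : g 0 = 1 - Real.exp (-2 * R 0) := by simp [hg]
  -- rearrange
  have hFτ : (0:ℝ) < Real.exp (2 * c * τ) := Real.exp_pos _
  have hFτ' : Real.exp (2 * c * τ) * Real.exp (-2 * c * τ) = 1 := by
    rw [← Real.exp_add]; ring_nf; exact Real.exp_zero
  have hEτ : (0:ℝ) < Real.exp (-2 * c * τ) := Real.exp_pos _
  have key : 1 - Real.exp (-2 * R τ) ≤ (1 - Real.exp (-2 * R 0)) * Real.exp (-2 * c * τ) := by
    have : (1 - Real.exp (-2 * R τ)) * Real.exp (2 * c * τ) ≤ 1 - Real.exp (-2 * R 0) := by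
      rw [← hg0]; exact hgτ
    have h := mul_le_mul_of_nonneg_right this hEτ.le
    rw [mul_assoc, hFτ', mul_one] at h
    exact h
  have hpos : 0 < 1 - (1 - Real.exp (-2 * R 0)) * Real.exp (-2 * c * τ) := by
    have h1 : 1 - Real.exp (-2 * R 0) < 1 := by
      have := Real.exp_pos (-2 * R 0); linarith
    have h2 : Real.exp (-2 * c * τ) < 1 := by
      apply Real.exp_lt_one_iff.2; nlinarith
    have h0 : 0 ≤ 1 - Real.exp (-2 * R 0) := by
      have : Real.exp (-2 * R 0) ≤ 1 := by
        apply Real.exp_le_one_iff.2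
        have := hR0 0 le_rfl; linarith
      linarith
    nlinarith
  have hlog : Real.log (1 - (1 - Real.exp (-2 * R 0)) * Real.exp (-2 * c * τ))
      ≤ -2 * R τ := by
    calc Real.log (1 - (1 - Real.exp (-2 * R 0)) * Real.exp (-2 * c * τ))
        ≤ Real.log (Real.exp (-2 * R τ)) := by
          apply Real.log_le_log hpos; linarith
      _ = -2 * R τ := Real.log_exp _
  linarith
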